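/- For quantum channels E, E', F, F' with appropriate input/output spaces, the diamond norm of the difference of tensor products satisfies ‖E ⊗ F − E' ⊗ F'‖_⋄ ≤ ‖E − E'‖_⋄ + ‖F − F'‖_⋄. -/

import Mathlib

open scoped Matrix Kronecker ComplexOrder
open Matrix

noncomputable section

namespace QIT

variable {A B A' B' O : Type*}

/-- A density operator: positive semidefinite with unit trace. -/
def IsDensity [Fintype A] (ρ : Matrix A A ℂ) : Prop :=
  ρ.PosSemidef ∧ ρ.trace = 1

open Classical in
/-- Square root of a positive semidefinite matrix (junk value otherwise). -/
def msqrt [Fintype A] [DecidableEq A] (M : Matrix A A ℂ) : Matrix A A ℂ :=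
  if h : M.PosSemidef then h.1.eigenvectorUnitary.1 *
    diagonal ((↑) ∘ Real.sqrt ∘ h.1.eigenvalues) * (star h.1.eigenvectorUnitary : Matrix A A ℂ)
  else 0

/-- Trace norm ‖M‖₁ = tr √(MᴴM). -/
def traceNorm [Fintype A] [DecidableEq A] (M : Matrix A A ℂ) : ℝ :=
  (msqrt (Mᴴ * M)).trace.re

/-- Fidelity F(ρ,σ) = tr √(√ρ σ √ρ). -/
def fidelity [Fintype A] [DecidableEq A] (ρ σ : Matrix A A ℂ) : ℝ :=
  (msqrt (msqrt ρ * σ * msqrt ρ)).trace.re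

/-- Von Neumann entropy in bits, via eigenvalues. -/
def entropy [Fintype A] [DecidableEq A] (ρ : Matrix A A ℂ) : ℝ :=
  if h : ρ.IsHermitian then -∑ i, (h.eigenvalues i) * Real.logb 2 (h.eigenvalues i) else 0

/-- Partial trace over the second tensor factor. -/
def ptraceB [Fintype B] (M : Matrix (A × B) (A × B) ℂ) : Matrix A A ℂ :=
  of fun i j => ∑ b, M (i, b) (j, b)

/-- Partial trace over the first tensor factor. -/
def ptraceA [Fintype A] (M : Matrix (A × B) (A × B) ℂ) : Matrix B B ℂ :=
  of fun i j => ∑ a, M (a, i) (a, j)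

/-- Quantum mutual information I(A:B) = H(A) + H(B) - H(AB). -/
def mutualInfo [Fintype A] [DecidableEq A] [Fintype B] [DecidableEq B]
    (ρ : Matrix (A × B) (A × B) ℂ) : ℝ :=
  entropy (ptraceB ρ) + entropy (ptraceA ρ) - entropy ρ

/-- Binary entropy function (base 2). -/
def binEntropy (x : ℝ) : ℝ := -(x * Real.logb 2 x) - (1 - x) * Real.logb 2 (1 - x)

/-- Extension Φ ⊗ id_B of a linear map on matrices. -/
def lext [Fintype A] [Fintype A'] [Fintype B]
    (Φ : Matrix A A ℂ →ₗ[ℂ] Matrix A' A' ℂ) :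
    Matrix (A × B) (A × B) ℂ →ₗ[ℂ] Matrix (A' × B) (A' × B) ℂ where
  toFun M := of fun p q => Φ (of fun i j => M (i, p.2) (j, q.2)) p.1 q.1
  map_add' M N := by
    ext p q
    have h : (of fun i j => (M + N) (i, p.2) (j, q.2)) =
        (of fun i j => M (i, p.2) (j, q.2)) + (of fun i j => N (i, p.2) (j, q.2)) := rfl
    simp only [of_apply, Matrix.add_apply]
    rw [show (of fun i j => M (i, p.2) (j, q.2) + N (i, p.2) (j, q.2)) =
        (of fun i j => M (i, p.2) (j, q.2)) + (of fun i j => N (i, p.2) (j, q.2)) from rfl,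
      map_add]
    simp [Matrix.add_apply]
  map_smul' c M := by
    ext p q
    simp only [of_apply, Matrix.smul_apply, RingHom.id_apply]
    rw [show (of fun i j => c • M (i, p.2) (j, q.2)) =
        c • (of fun i j => M (i, p.2) (j, q.2)) from rfl, LinearMap.map_smul]
    simp [Matrix.smul_apply]

/-- Extension id_A ⊗ Ψ of a linear map on matrices. -/
def rext [Fintype B] [Fintype B'] [Fintype A]
    (Ψ : Matrix B B ℂ →ₗ[ℂ] Matrix B' B' ℂ) :
    Matrix (A × B) (A × B) ℂ →ₗ[ℂ] Matrix (A × B') (A × B') ℂ where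
  toFun M := of fun p q => Ψ (of fun i j => M (p.1, i) (q.1, j)) p.2 q.2
  map_add' M N := by
    ext p q
    simp only [of_apply, Matrix.add_apply]
    rw [show (of fun i j => M (p.1, i) (q.1, j) + N (p.1, i) (q.1, j)) =
        (of fun i j => M (p.1, i) (q.1, j)) + (of fun i j => N (p.1, i) (q.1, j)) from rfl,
      map_add]
    simp [Matrix.add_apply]
  map_smul' c M := by
    ext p q
    simp only [of_apply, Matrix.smul_apply, RingHom.id_apply]
    rw [show (of fun i j => c • M (p.1, i) (q.1, j)) =
        c • (of fun i j => M (p.1, i) (q.1, j)) from rfl, LinearMap.map_smul]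
    simp [Matrix.smul_apply]

/-- Tensor product E ⊗ F of two maps on matrices. -/
def tensorMap [Fintype A] [Fintype A'] [Fintype B] [Fintype B']
    (E : Matrix A A ℂ →ₗ[ℂ] Matrix A' A' ℂ) (F : Matrix B B ℂ →ₗ[ℂ] Matrix B' B' ℂ) :
    Matrix (A × B) (A × B) ℂ →ₗ[ℂ] Matrix (A' × B') (A' × B') ℂ :=
  (rext F).comp (lext E)

/-- Completely positive trace preserving map. -/
def IsCPTP [Fintype A] [Fintype A'] (Φ : Matrix A A ℂ →ₗ[ℂ] Matrix A' A' ℂ) : Prop :=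
  (∀ (k : ℕ) (M : Matrix (A × Fin k) (A × Fin k) ℂ), M.PosSemidef →
      (lext (B := Fin k) Φ M).PosSemidef) ∧
  ∀ M : Matrix A A ℂ, (Φ M).trace = M.trace

/-- Diamond norm via finite-dimensional ancillas. -/
def diamondNorm [Fintype A] [DecidableEq A] [Fintype A'] [DecidableEq A']
    (Φ : Matrix A A ℂ →ₗ[ℂ] Matrix A' A' ℂ) : ℝ :=
  sSup {r | ∃ (k : ℕ) (X : Matrix (A × Fin k) (A × Fin k) ℂ),
    traceNorm X = 1 ∧ r = traceNorm (lext (B := Fin k) Φ X)}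

/-- Choi–Jamiołkowski matrix of a map. -/
def choi [Fintype A] [DecidableEq A] (Φ : Matrix A A ℂ →ₗ[ℂ] Matrix O O ℂ) :
    Matrix (A × O) (A × O) ℂ :=
  of fun p q => Φ (single p.1 q.1 1) p.2 q.2

/-- The map associated to a Choi matrix. -/
def choiAction [Fintype A] (J : Matrix (A × O) (A × O) ℂ) :
    Matrix A A ℂ →ₗ[ℂ] Matrix O O ℂ where
  toFun ρ := of fun o o' => ∑ i, ∑ j, ρ i j * J (i, o) (j, o')
  map_add' M N := by
    ext o o'
    simp [Matrix.add_apply, add_mul, Finset.sum_add_distrib]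
  map_smul' c M := by
    ext o o'
    simp [Matrix.smul_apply, Finset.mul_sum, mul_assoc]

/-- Permutation unitary W_π on n tensor copies: W_π|f⟩ = |f ∘ π⁻¹⟩. -/
def permMat (n : ℕ) (A : Type*) [DecidableEq A] (π : Equiv.Perm (Fin n)) :
    Matrix (Fin n → A) (Fin n → A) ℂ :=
  of fun g f => if g = f ∘ π.symm then 1 else 0

/-- Partial trace keeping only the j-th copy and the system B. -/
def reduceJ [Fintype A] [DecidableEq A] [Fintype B] {n : ℕ} (j : Fin n)
    (M : Matrix ((Fin n → A) × B) ((Fin n → A) × B) ℂ) : Matrix (A × B) (A × B) ℂ :=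
  of fun p q => ∑ f : Fin n → A,
    if f j = p.1 then M (f, p.2) (Function.update f j q.1, q.2) else 0

/-- Partial trace keeping only the j-th copy (no side system). -/
def reduceJ0 [Fintype A] [DecidableEq A] {n : ℕ} (j : Fin n)
    (M : Matrix (Fin n → A) (Fin n → A) ℂ) : Matrix A A ℂ :=
  of fun a a' => ∑ f : Fin n → A,
    if f j = a then M f (Function.update f j a') else 0

/-- Partial trace keeping the j-th copy on each side. -/
def reduceJJ [Fintype A] [DecidableEq A] [Fintype B] [DecidableEq B] {n : ℕ} (j : Fin n)
    (M : Matrix ((Fin n → A) × (Fin n → B)) ((Fin n → A) × (Fin n → B)) ℂ) :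
    Matrix (A × B) (A × B) ℂ :=
  of fun p q => ∑ f : Fin n → A, ∑ g : Fin n → B,
    if f j = p.1 ∧ g j = p.2 then
      M (f, g) (Function.update f j q.1, Function.update g j q.2) else 0

/-- A symmetric broadcasting channel: covariant under all permutations of outputs. -/
def IsSymmetricBC [Fintype A] [DecidableEq A] {n : ℕ}
    (Λ : Matrix A A ℂ →ₗ[ℂ] Matrix (Fin n → A) (Fin n → A) ℂ) : Prop :=
  ∀ (ρ : Matrix A A ℂ), IsDensity ρ → ∀ π : Equiv.Perm (Fin n),
    Λ ρ = permMat n A π * Λ ρ * (permMat n A π)ᴴ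

/-- The optimal unilocal n-broadcasting fidelity of a bipartite state. -/
def fBroadcast [Fintype A] [DecidableEq A] [Fintype B] [DecidableEq B] (n : ℕ)
    (ρ : Matrix (A × B) (A × B) ℂ) : ℝ :=
  sSup {r | ∃ Λ : Matrix A A ℂ →ₗ[ℂ] Matrix (Fin n → A) (Fin n → A) ℂ, IsCPTP Λ ∧
    r = (n : ℝ)⁻¹ * ∑ j : Fin n, fidelity ρ (reduceJ j (lext (B := B) Λ ρ))}

/-- Channel conjugated by the permutation unitary W_π. -/
def conjPerm [Fintype A] [DecidableEq A] {n : ℕ} (π : Equiv.Perm (Fin n))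
    (Λ : Matrix A A ℂ →ₗ[ℂ] Matrix (Fin n → A) (Fin n → A) ℂ) :
    Matrix A A ℂ →ₗ[ℂ] Matrix (Fin n → A) (Fin n → A) ℂ where
  toFun ρ := permMat n A π * Λ ρ * (permMat n A π)ᴴ
  map_add' M N := by simp [map_add, Matrix.mul_add, Matrix.add_mul]
  map_smul' c M := by simp [Matrix.mul_smul, Matrix.smul_mul]

/-- Symmetrization (1/n!) Σ_π W_π Λ(·) W_π†. -/
def symmetrize [Fintype A] [DecidableEq A] {n : ℕ}
    (Λ : Matrix A A ℂ →ₗ[ℂ] Matrix (Fin n → A) (Fin n → A) ℂ) :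
    Matrix A A ℂ →ₗ[ℂ] Matrix (Fin n → A) (Fin n → A) ℂ :=
  ((n.factorial : ℂ))⁻¹ • ∑ π : Equiv.Perm (Fin n), conjPerm π Λ

/-- Partial transpose on the first (input) factor. -/
def ptransA (J : Matrix (A × O) (A × O) ℂ) : Matrix (A × O) (A × O) ℂ :=
  of fun p q => J (q.1, p.2) (p.1, q.2)

/-- tr_A (X ρ_AB), contracting the A index: entry ((o,b),(o',b')) = Σ_{i,k} X(i,o)(k,o') ρ(k,b)(i,b'). -/
def traceContractA [Fintype A] (X : Matrix (A × O) (A × O) ℂ)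
    (ρ : Matrix (A × B) (A × B) ℂ) : Matrix (O × B) (O × B) ℂ :=
  of fun p q => ∑ i, ∑ k, X (i, p.1) (k, q.1) * ρ (k, p.2) (i, q.2)

/-- A POVM. -/
def IsPOVM {I : Type*} [Fintype I] [Fintype A] [DecidableEq A]
    (M : I → Matrix A A ℂ) : Prop :=
  (∀ i, (M i).PosSemidef) ∧ ∑ i, M i = 1

/-- Quantum-to-classical channel of a POVM: ρ ↦ Σᵢ tr(Mᵢρ)|i⟩⟨i|. -/
def qcChan {I : Type*} [Fintype I] [DecidableEq I] [Fintype A]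
    (M : I → Matrix A A ℂ) : Matrix A A ℂ →ₗ[ℂ] Matrix I I ℂ where
  toFun ρ := of fun i j => if i = j then (M i * ρ).trace else 0
  map_add' X Y := by
    ext i j
    simp only [of_apply, Matrix.add_apply]
    split_ifs <;> simp [Matrix.mul_add]
  map_smul' c X := by
    ext i j
    simp only [of_apply, Matrix.smul_apply, RingHom.id_apply]
    split_ifs <;> simp [Matrix.mul_smul]

/-- Classical broadcast of a POVM outcome into n copies: ρ ↦ Σᵢ tr(Mᵢρ)(|i⟩⟨i|)^{⊗n}. -/
def bcChan {I : Type*} [Fintype I] [DecidableEq I] [Fintype A] {n : ℕ} (hn : 0 < n)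
    (M : I → Matrix A A ℂ) : Matrix A A ℂ →ₗ[ℂ] Matrix (Fin n → I) (Fin n → I) ℂ where
  toFun ρ := of fun f g =>
    if f = g ∧ (∀ k, f k = f ⟨0, hn⟩) then (M (f ⟨0, hn⟩) * ρ).trace else 0
  map_add' X Y := by
    ext f g
    simp only [of_apply, Matrix.add_apply]
    split_ifs <;> simp [Matrix.mul_add]
  map_smul' c X := by
    ext f g
    simp only [of_apply, Matrix.smul_apply, RingHom.id_apply]
    split_ifs <;> simp [Matrix.mul_smul]


section PSDSqrt

open scoped MatrixOrder

variable {n : Type*} [Fintype n] [DecidableEq n] {M : Matrix n n ℂ}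

/-- Square root of a positive semidefinite matrix, via the spectral decomposition. -/
def _root_.Matrix.PosSemidef.sqrt (h : M.PosSemidef) : Matrix n n ℂ :=
  h.1.eigenvectorUnitary.1 *
    diagonal ((↑) ∘ Real.sqrt ∘ h.1.eigenvalues) * (star h.1.eigenvectorUnitary : Matrix n n ℂ)

lemma _root_.Matrix.PosSemidef.sqrt_eq_cfcSqrt (h : M.PosSemidef) : h.sqrt = CFC.sqrt M := by
  rw [CFC.sqrt_eq_cfc, cfc_nnreal_eq_real _ M, h.1.cfc_eq]
  simp only [Matrix.IsHermitian.cfc, Unitary.conjStarAlgAut_apply, Matrix.PosSemidef.sqrt]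
  congr 3
  funext i
  simp [max_eq_left (h.eigenvalues_nonneg i)]

lemma _root_.Matrix.PosSemidef.posSemidef_sqrt (h : M.PosSemidef) : h.sqrt.PosSemidef := by
  rw [Matrix.PosSemidef.sqrt_eq_cfcSqrt]
  exact (CFC.sqrt_nonneg M).posSemidef

lemma _root_.Matrix.PosSemidef.sqrt_mul_self (h : M.PosSemidef) : h.sqrt * h.sqrt = M := by
  rw [Matrix.PosSemidef.sqrt_eq_cfcSqrt]
  exact CFC.sqrt_mul_sqrt_self M h.nonneg

lemma _root_.Matrix.PosSemidef.sq_sqrt (h : M.PosSemidef) : h.sqrt ^ 2 = M := by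
  rw [Matrix.PosSemidef.sqrt_eq_cfcSqrt]
  exact CFC.sq_sqrt M h.nonneg

lemma _root_.Matrix.PosSemidef.eq_sqrt_of_sq_eq {B : Matrix n n ℂ} (hB : B.PosSemidef) (hM : M.PosSemidef)
    (hBM : B ^ 2 = M) : B = hM.sqrt := by
  rw [Matrix.PosSemidef.sqrt_eq_cfcSqrt, ← hBM, CFC.sqrt_sq B hB.nonneg]

end PSDSqrt

lemma msqrt_eq {A : Type*} [Fintype A] [DecidableEq A] {M : Matrix A A ℂ} (h : M.PosSemidef) :
    msqrt M = h.sqrt := by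
  rw [msqrt, dif_pos h]
  rfl

/-! ### Core trace-norm development -/

section Core

variable {n : Type*} [Fintype n] [DecidableEq n]

/-- Squared Euclidean norm of a complex vector. -/
def nsq {m : Type*} [Fintype m] (v : m → ℂ) : ℝ := ∑ i, Complex.normSq (v i)

lemma nsq_nonneg {m : Type*} [Fintype m] (v : m → ℂ) : 0 ≤ nsq v :=
  Finset.sum_nonneg fun _ _ => Complex.normSq_nonneg _

lemma star_dot_self {m : Type*} [Fintype m] (v : m → ℂ) :
    star v ⬝ᵥ v = ((nsq v : ℝ) : ℂ) := by
  simp only [dotProduct, Pi.star_apply, nsq]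
  push_cast
  refine Finset.sum_congr rfl fun i _ => ?_
  rw [Complex.normSq_eq_conj_mul_self]
  rfl

lemma nsq_eq_re_dot {m : Type*} [Fintype m] (v : m → ℂ) :
    nsq v = (star v ⬝ᵥ v).re := by rw [star_dot_self]; simp

/-- Cauchy–Schwarz for the complex dot product. -/
lemma abs_star_dot_le {m : Type*} [Fintype m] (x y : m → ℂ) :
    ‖star x ⬝ᵥ y‖ ≤ Real.sqrt (nsq x) * Real.sqrt (nsq y) := by
  have h1 : ‖star x ⬝ᵥ y‖ ≤ ∑ i, ‖x i‖ * ‖y i‖ := by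
    refine (norm_sum_le _ _).trans_eq ?_
    refine Finset.sum_congr rfl fun i _ => ?_
    simp [norm_mul]
  refine h1.trans ?_
  have h2 := Real.sum_mul_le_sqrt_mul_sqrt Finset.univ
    (fun i => ‖x i‖) (fun i => ‖y i‖)
  refine h2.trans_eq ?_
  congr 1 <;> · congr 1; unfold nsq; exact Finset.sum_congr rfl fun i _ => (Complex.sq_norm _)

lemma re_star_dot_le {m : Type*} [Fintype m] (x y : m → ℂ) :
    (star x ⬝ᵥ y).re ≤ Real.sqrt (nsq x) * Real.sqrt (nsq y) :=
  (Complex.re_le_norm _).trans (abs_star_dot_le x y)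

/-- `C` is a contraction (w.r.t. the Euclidean norm). -/
def good {m : Type*} [Fintype m] (C : Matrix m m ℂ) : Prop :=
  ∀ v : m → ℂ, nsq (C *ᵥ v) ≤ nsq v

lemma dot_cT {m p : Type*} [Fintype m] [Fintype p] (A : Matrix m p ℂ) (u : p → ℂ) (w : m → ℂ) :
    star u ⬝ᵥ (Aᴴ *ᵥ w) = star (A *ᵥ u) ⬝ᵥ w := by
  rw [Matrix.dotProduct_mulVec, Matrix.star_mulVec]

lemma nsq_mulVec {m p : Type*} [Fintype m] [Fintype p] (A : Matrix m p ℂ) (u : p → ℂ) :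
    nsq (A *ᵥ u) = (star u ⬝ᵥ ((Aᴴ * A) *ᵥ u)).re := by
  rw [nsq_eq_re_dot, ← Matrix.mulVec_mulVec, dot_cT]

end Core

section Spec

variable {n : Type*} [Fintype n] [DecidableEq n]

lemma trace_conj_unitary {V : Matrix n n ℂ} (D : Matrix n n ℂ) (hV : star V * V = 1) :
    (V * D * star V).trace = D.trace := by
  rw [Matrix.trace_mul_cycle, hV, Matrix.one_mul]

lemma conj_entry (V Y : Matrix n n ℂ) (i : n) :
    (star V * Y * V) i i = star (fun r => V r i) ⬝ᵥ (Y *ᵥ fun r => V r i) := by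
  simp only [Matrix.mul_apply, Matrix.mulVec, dotProduct, Pi.star_apply, Matrix.star_apply,
    Finset.sum_mul, Finset.mul_sum]
  rw [Finset.sum_comm]
  refine Finset.sum_congr rfl fun r _ => Finset.sum_congr rfl fun s _ => ?_
  ring

lemma trace_dots (V Y : Matrix n n ℂ) :
    (star V * Y * V).trace = ∑ i, star (fun r => V r i) ⬝ᵥ (Y *ᵥ fun r => V r i) := by
  simp only [Matrix.trace, Matrix.diag]
  exact Finset.sum_congr rfl fun i _ => conj_entry V Y i

theorem traceNorm_spec (M : Matrix n n ℂ) :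
    0 ≤ traceNorm M ∧
      (∃ C : Matrix n n ℂ, good C ∧ ((Cᴴ * M).trace).re = traceNorm M) ∧
      (∀ C : Matrix n n ℂ, good C → ((Cᴴ * M).trace).re ≤ traceNorm M) := by
  have hPSD := Matrix.posSemidef_conjTranspose_mul_self M
  set hH : (Mᴴ * M).IsHermitian := hPSD.1 with hHdef
  set lam : n → ℝ := hH.eigenvalues with hlamdef
  set V : Matrix n n ℂ := (hH.eigenvectorUnitary : Matrix n n ℂ) with hVdef
  have hV1 : star V * V = 1 := hH.eigenvectorUnitary.2.1
  have hV2 : V * star V = 1 := hH.eigenvectorUnitary.2.2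
  have hlam : ∀ i, 0 ≤ lam i := fun i => hPSD.eigenvalues_nonneg i
  have hspec : Mᴴ * M = V * Matrix.diagonal (fun i => (lam i : ℂ)) * star V := by
    have h0 := hH.spectral_theorem
    simp only [Unitary.conjStarAlgAut_apply] at h0
    exact h0
  -- collapse lemma
  have collapse : ∀ a b : n → ℂ,
      (V * Matrix.diagonal a * star V) * (V * Matrix.diagonal b * star V) =
        V * Matrix.diagonal (fun i => a i * b i) * star V := by
    intro a b
    have h : Matrix.diagonal a * (star V * V) * Matrix.diagonal b
        = Matrix.diagonal (fun i => a i * b i) := by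
      rw [hV1, Matrix.mul_one, Matrix.diagonal_mul_diagonal]
    calc (V * Matrix.diagonal a * star V) * (V * Matrix.diagonal b * star V)
        = V * (Matrix.diagonal a * (star V * V) * Matrix.diagonal b) * star V := by
          simp only [Matrix.mul_assoc]
      _ = _ := by rw [h]
  -- the trace norm equals the sum of singular values
  have hSpsd : (V * Matrix.diagonal (fun i => ((Real.sqrt (lam i) : ℝ) : ℂ)) * star V).PosSemidef := by
    rw [Matrix.star_eq_conjTranspose]
    refine Matrix.PosSemidef.mul_mul_conjTranspose_same ?_ V
    refine Matrix.PosSemidef.diagonal ?_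
    intro i
    exact Complex.zero_le_real.2 (Real.sqrt_nonneg _)
  have hSsq : (V * Matrix.diagonal (fun i => ((Real.sqrt (lam i) : ℝ) : ℂ)) * star V) ^ 2
      = Mᴴ * M := by
    rw [pow_two, collapse, hspec]
    have h : (fun i => ((Real.sqrt (lam i) : ℝ) : ℂ) * ((Real.sqrt (lam i) : ℝ) : ℂ))
        = fun i => ((lam i : ℝ) : ℂ) := by
      funext i
      rw [← Complex.ofReal_mul, Real.mul_self_sqrt (hlam i)]
    rw [h]
  have hsqrt_eq : hPSD.sqrt
      = V * Matrix.diagonal (fun i => ((Real.sqrt (lam i) : ℝ) : ℂ)) * star V :=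
    (hSpsd.eq_sqrt_of_sq_eq hPSD hSsq).symm
  have htn : traceNorm M = ∑ i, Real.sqrt (lam i) := by
    rw [traceNorm, msqrt_eq hPSD, hsqrt_eq, trace_conj_unitary _ hV1,
      Matrix.trace_diagonal]
    push_cast
    simp
  -- squared norms of columns
  have colsq : ∀ i, star (fun r => V r i) ⬝ᵥ (fun r => V r i) = (star V * V) i i := by
    intro i
    simp [Matrix.mul_apply, dotProduct, Matrix.star_apply]
  have hnsqcol : ∀ i, nsq (fun r => V r i) = 1 := by
    intro i
    rw [nsq_eq_re_dot, colsq, hV1]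
    simp
  have hMcol : ∀ i, nsq (M *ᵥ fun r => V r i) = lam i := by
    intro i
    rw [nsq_mulVec, ← conj_entry]
    have : star V * (Mᴴ * M) * V = Matrix.diagonal (fun i => (lam i : ℂ)) := by
      rw [hspec]
      calc star V * (V * Matrix.diagonal (fun i => (lam i : ℂ)) * star V) * V
          = (star V * V) * Matrix.diagonal (fun i => (lam i : ℂ)) * (star V * V) := by
            simp only [Matrix.mul_assoc]
        _ = _ := by rw [hV1]; simp
    rw [this]
    simp
  -- upper bound for all contractions
  have hub : ∀ C : Matrix n n ℂ, good C → ((Cᴴ * M).trace).re ≤ traceNorm M := by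
    intro C hC
    have h1 : (Cᴴ * M).trace = (star V * (Cᴴ * M) * V).trace := by
      rw [Matrix.trace_mul_cycle, ← Matrix.mul_assoc, hV2, Matrix.one_mul]
    rw [h1, trace_dots, htn, Complex.re_sum]
    refine Finset.sum_le_sum fun i _ => ?_
    have h2 : star (fun r => V r i) ⬝ᵥ ((Cᴴ * M) *ᵥ fun r => V r i)
        = star (C *ᵥ fun r => V r i) ⬝ᵥ (M *ᵥ fun r => V r i) := by
      rw [← Matrix.mulVec_mulVec, dot_cT]
    rw [h2]
    refine (re_star_dot_le _ _).trans ?_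
    have h3 : Real.sqrt (nsq (C *ᵥ fun r => V r i)) ≤ 1 := by
      rw [show (1:ℝ) = Real.sqrt (nsq (fun r => V r i)) by rw [hnsqcol]; simp]
      exact Real.sqrt_le_sqrt (hC _)
    calc Real.sqrt (nsq (C *ᵥ fun r => V r i)) * Real.sqrt (nsq (M *ᵥ fun r => V r i))
        ≤ 1 * Real.sqrt (nsq (M *ᵥ fun r => V r i)) := by
          exact mul_le_mul_of_nonneg_right h3 (Real.sqrt_nonneg _)
      _ = Real.sqrt (lam i) := by rw [one_mul, hMcol]
  refine ⟨htn ▸ Finset.sum_nonneg fun i _ => Real.sqrt_nonneg _, ?_, hub⟩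
  -- existence of an optimal contraction
  set pinv : n → ℂ := fun i => ((Real.sqrt (lam i) : ℝ) : ℂ)⁻¹ with hpinvdef
  set N : Matrix n n ℂ := V * Matrix.diagonal pinv * star V with hNdef
  set C : Matrix n n ℂ := M * N with hCdef
  have hstar : star pinv = pinv := by
    funext i
    rw [hpinvdef]
    simp [Pi.star_apply, Complex.star_def, ← Complex.ofReal_inv, Complex.conj_ofReal]
  have hNH : Nᴴ = N := by
    rw [hNdef, Matrix.conjTranspose_mul, Matrix.conjTranspose_mul,
      Matrix.diagonal_conjTranspose, hstar, Matrix.star_eq_conjTranspose,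
      Matrix.conjTranspose_conjTranspose, ← Matrix.mul_assoc]
  have hCH : Cᴴ = N * Mᴴ := by rw [hCdef, Matrix.conjTranspose_mul, hNH]
  have hCHM : Cᴴ * M = V * Matrix.diagonal (fun i => pinv i * (lam i : ℂ)) * star V := by
    rw [hCH, Matrix.mul_assoc, hspec, hNdef, collapse]
  have hdiagval : ∀ i, pinv i * (lam i : ℂ) = ((Real.sqrt (lam i) : ℝ) : ℂ) := by
    intro i
    rcases eq_or_lt_of_le (hlam i) with h | h
    · have h0 : lam i = 0 := h.symm
      rw [hpinvdef]
      simp [h0]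
    · have hs : Real.sqrt (lam i) ≠ 0 := ne_of_gt (Real.sqrt_pos.2 h)
      rw [hpinvdef]
      show ((Real.sqrt (lam i) : ℝ) : ℂ)⁻¹ * ((lam i : ℝ) : ℂ) = ((Real.sqrt (lam i) : ℝ) : ℂ)
      rw [← Complex.ofReal_inv, ← Complex.ofReal_mul]
      congr 1
      rw [inv_mul_eq_iff_eq_mul₀ hs]
      exact (Real.mul_self_sqrt (hlam i)).symm
  refine ⟨C, ?_, ?_⟩
  · -- C is a contraction
    intro v
    have hCC : Cᴴ * C = V * Matrix.diagonal (fun i => pinv i * (lam i : ℂ) * pinv i) * star V := by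
      have e1 : Cᴴ * C = N * (Mᴴ * M) * N := by
        rw [hCH, hCdef]
        simp only [Matrix.mul_assoc]
      rw [e1, hspec, hNdef, collapse, collapse]
    have dotlemma : ∀ (dc : n → ℂ) (v : n → ℂ),
        star v ⬝ᵥ ((V * Matrix.diagonal dc * star V) *ᵥ v)
          = ∑ i, dc i * ((Complex.normSq ((star V *ᵥ v) i) : ℝ) : ℂ) := by
      intro dc v
      rw [← Matrix.mulVec_mulVec, ← Matrix.mulVec_mulVec, Matrix.dotProduct_mulVec]
      have hrow : star v ᵥ* V = star (star V *ᵥ v) := by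
        rw [Matrix.star_mulVec, Matrix.star_eq_conjTranspose, Matrix.conjTranspose_conjTranspose]
      rw [hrow]
      simp only [dotProduct, Pi.star_apply, Matrix.mulVec_diagonal]
      refine Finset.sum_congr rfl fun i _ => ?_
      rw [Complex.normSq_eq_conj_mul_self]
      push_cast
      simp only [Complex.star_def]
      ring
    have dotlemma' : ∀ (dR : n → ℝ) (w : n → ℂ),
        (star w ⬝ᵥ ((V * Matrix.diagonal (fun i => ((dR i : ℝ) : ℂ)) * star V) *ᵥ w)).re
          = ∑ i, dR i * Complex.normSq ((star V *ᵥ w) i) := by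
      intro dR w
      rw [dotlemma]
      have h : ∑ i, ((dR i : ℝ) : ℂ) * ((Complex.normSq ((star V *ᵥ w) i) : ℝ) : ℂ)
          = ((∑ i, dR i * Complex.normSq ((star V *ᵥ w) i) : ℝ) : ℂ) := by
        push_cast
        rfl
      rw [h, Complex.ofReal_re]
    have hdform : (fun i => pinv i * (lam i : ℂ) * pinv i)
        = fun i => ((((Real.sqrt (lam i))⁻¹ * lam i * (Real.sqrt (lam i))⁻¹ : ℝ) : ℝ) : ℂ) := by
      funext i
      rw [hpinvdef]
      push_cast
      ring
    have hval : nsq (C *ᵥ v) = ∑ i, ((Real.sqrt (lam i))⁻¹ * lam i * (Real.sqrt (lam i))⁻¹)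
        * Complex.normSq ((star V *ᵥ v) i) := by
      rw [nsq_mulVec, hCC, hdform, dotlemma']
    have hnsqv : ∑ i, Complex.normSq ((star V *ᵥ v) i) = nsq v := by
      have h4 : (star V)ᴴ * star V = 1 := by
        rw [Matrix.star_eq_conjTranspose, Matrix.conjTranspose_conjTranspose]
        exact hV2
      have h5 := nsq_mulVec (star V) v
      rw [h4, Matrix.one_mulVec, ← nsq_eq_re_dot] at h5
      simpa [nsq] using h5
    rw [hval, ← hnsqv]
    refine Finset.sum_le_sum fun i _ => ?_
    have hb : (Real.sqrt (lam i))⁻¹ * lam i * (Real.sqrt (lam i))⁻¹ ≤ 1 := by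
      rcases eq_or_lt_of_le (hlam i) with h | h
      · simp [← h]
      · have hs : (0:ℝ) < Real.sqrt (lam i) := Real.sqrt_pos.2 h
        have h2 : Real.sqrt (lam i) * Real.sqrt (lam i) = lam i := Real.mul_self_sqrt (hlam i)
        set s : ℝ := Real.sqrt (lam i) with hsdef
        rw [← h2]
        have h3 : s⁻¹ * (s * s) * s⁻¹ = 1 := by field_simp
        rw [h3]
    calc (Real.sqrt (lam i))⁻¹ * lam i * (Real.sqrt (lam i))⁻¹
          * Complex.normSq ((star V *ᵥ v) i)
        ≤ 1 * Complex.normSq ((star V *ᵥ v) i) :=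
          mul_le_mul_of_nonneg_right hb (Complex.normSq_nonneg _)
      _ = _ := one_mul _
  · -- optimality
    rw [hCHM, trace_conj_unitary _ hV1, Matrix.trace_diagonal, htn]
    rw [show ∑ i, pinv i * (lam i : ℂ) = ∑ i, ((Real.sqrt (lam i) : ℝ) : ℂ) from
      Finset.sum_congr rfl fun i _ => hdiagval i]
    push_cast
    simp

end Spec

section TNC

variable {n : Type*} [Fintype n] [DecidableEq n]

lemma traceNorm_nonneg (M : Matrix n n ℂ) : 0 ≤ traceNorm M := (traceNorm_spec M).1

lemma traceNorm_triangle (M N : Matrix n n ℂ) :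
    traceNorm (M + N) ≤ traceNorm M + traceNorm N := by
  obtain ⟨C, hC, hCe⟩ := (traceNorm_spec (M + N)).2.1
  rw [← hCe, Matrix.mul_add, Matrix.trace_add]
  simp only [Complex.add_re]
  have h1 := (traceNorm_spec M).2.2 C hC
  have h2 := (traceNorm_spec N).2.2 C hC
  linarith

lemma traceNorm_neg (M : Matrix n n ℂ) : traceNorm (-M) = traceNorm M := by
  unfold traceNorm
  rw [Matrix.conjTranspose_neg, Matrix.neg_mul, Matrix.mul_neg, neg_neg]

lemma psd_smul {c : ℝ} (hc : 0 ≤ c) {P : Matrix n n ℂ} (hP : P.PosSemidef) :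
    ((c : ℂ) • P).PosSemidef := by
  have h : (c : ℂ) • P = ((Real.sqrt c : ℂ) • hP.sqrt)ᴴ * ((Real.sqrt c : ℂ) • hP.sqrt) := by
    rw [Matrix.conjTranspose_smul, Matrix.smul_mul, Matrix.mul_smul, smul_smul,
      hP.posSemidef_sqrt.1, hP.sqrt_mul_self]
    congr 1
    rw [Complex.star_def, Complex.conj_ofReal, ← Complex.ofReal_mul, Real.mul_self_sqrt hc]
  rw [h]
  exact Matrix.posSemidef_conjTranspose_mul_self _

lemma traceNorm_smul (c : ℝ) (hc : 0 ≤ c) (M : Matrix n n ℂ) :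
    traceNorm ((c : ℂ) • M) = c * traceNorm M := by
  have hP := Matrix.posSemidef_conjTranspose_mul_self M
  have hprod : ((c : ℂ) • M)ᴴ * ((c : ℂ) • M) = ((c ^ 2 : ℝ) : ℂ) • (Mᴴ * M) := by
    rw [Matrix.conjTranspose_smul, Matrix.smul_mul, Matrix.mul_smul, smul_smul]
    congr 1
    rw [Complex.star_def, Complex.conj_ofReal, ← Complex.ofReal_mul]
    push_cast
    ring
  have hQ : (((c ^ 2 : ℝ) : ℂ) • (Mᴴ * M)).PosSemidef := psd_smul (by positivity) hP
  have hcP : (((c : ℝ) : ℂ) • hP.sqrt).PosSemidef := psd_smul hc hP.posSemidef_sqrt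
  have hsq : (((c : ℝ) : ℂ) • hP.sqrt) ^ 2 = ((c ^ 2 : ℝ) : ℂ) • (Mᴴ * M) := by
    rw [smul_pow, hP.sq_sqrt]
    congr 1
    push_cast
    ring
  have hkey : msqrt (((c ^ 2 : ℝ) : ℂ) • (Mᴴ * M)) = ((c : ℝ) : ℂ) • hP.sqrt := by
    rw [msqrt_eq hQ]
    exact (hcP.eq_sqrt_of_sq_eq hQ hsq).symm
  rw [traceNorm, hprod, hkey, traceNorm, msqrt_eq hP, Matrix.trace_smul,
    smul_eq_mul, Complex.re_ofReal_mul]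

lemma traceNorm_zero : traceNorm (0 : Matrix n n ℂ) = 0 := by
  have h := traceNorm_smul (n := n) 0 le_rfl 0
  simpa using h

lemma psd_trace_re_zero {P : Matrix n n ℂ} (hP : P.PosSemidef) (h : P.trace.re = 0) :
    P = 0 := by
  have hS : P = hP.sqrtᴴ * hP.sqrt := by rw [hP.posSemidef_sqrt.1, hP.sqrt_mul_self]
  have htr : P.trace.re = ∑ j, ∑ i, Complex.normSq (hP.sqrt i j) := by
    conv_lhs => rw [hS]
    rw [Matrix.trace]
    simp only [Matrix.diag, Matrix.mul_apply, Matrix.conjTranspose_apply, Complex.re_sum]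
    refine Finset.sum_congr rfl fun j _ => Finset.sum_congr rfl fun i _ => ?_
    rw [Complex.star_def, ← Complex.normSq_eq_conj_mul_self]
    simp
  rw [htr] at h
  have hz : ∀ j ∈ Finset.univ, (∑ i, Complex.normSq (hP.sqrt i (j : n))) = 0 := by
    rw [← Finset.sum_eq_zero_iff_of_nonneg]
    · exact h
    · intro j _
      exact Finset.sum_nonneg fun i _ => Complex.normSq_nonneg _
  have hz2 : ∀ i j, hP.sqrt i j = 0 := by
    intro i j
    have := (Finset.sum_eq_zero_iff_of_nonneg
      (fun i _ => Complex.normSq_nonneg (hP.sqrt i j))).mp (hz j (Finset.mem_univ j))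
      i (Finset.mem_univ i)
    exact Complex.normSq_eq_zero.mp this
  have hS0 : hP.sqrt = 0 := Matrix.ext hz2
  rw [hS, hS0]
  simp

lemma traceNorm_eq_zero {M : Matrix n n ℂ} (h : traceNorm M = 0) : M = 0 := by
  have hP := Matrix.posSemidef_conjTranspose_mul_self M
  have h1 : hP.sqrt.trace.re = 0 := by rw [traceNorm, msqrt_eq hP] at h; exact h
  have h2 : hP.sqrt = 0 := psd_trace_re_zero hP.posSemidef_sqrt h1
  have h3 : Mᴴ * M = 0 := by rw [← hP.sqrt_mul_self, h2, Matrix.mul_zero]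
  exact Matrix.conjTranspose_mul_self_eq_zero.mp h3

lemma traceNorm_sub_le (M N : Matrix n n ℂ) :
    traceNorm (M - N) ≤ traceNorm M + traceNorm N := by
  rw [sub_eq_add_neg]
  exact (traceNorm_triangle M (-N)).trans_eq (by rw [traceNorm_neg])

lemma traceNorm_submatrix {m : Type*} [Fintype m] [DecidableEq m] (e : m ≃ n)
    (M : Matrix n n ℂ) : traceNorm (M.submatrix e e) = traceNorm M := by
  have hP := Matrix.posSemidef_conjTranspose_mul_self M
  have hPe : (M.submatrix e e)ᴴ * (M.submatrix e e) = (Mᴴ * M).submatrix e e := by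
    rw [Matrix.conjTranspose_submatrix, Matrix.submatrix_mul_equiv]
  have hPs : ((Mᴴ * M).submatrix e e).PosSemidef := hP.submatrix e
  have hsub : (hP.sqrt.submatrix (e : m → n) (e : m → n)).PosSemidef :=
    hP.posSemidef_sqrt.submatrix e
  have hsq : (hP.sqrt.submatrix (e : m → n) (e : m → n)) ^ 2 = (Mᴴ * M).submatrix e e := by
    rw [pow_two, Matrix.submatrix_mul_equiv, hP.sqrt_mul_self]
  rw [traceNorm, traceNorm, hPe, msqrt_eq hPs, msqrt_eq hP,
    ← (hsub.eq_sqrt_of_sq_eq hPs hsq)]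
  congr 1
  rw [Matrix.trace, Matrix.trace]
  simp only [Matrix.diag, Matrix.submatrix_apply]
  exact Equiv.sum_comp e fun j => hP.sqrt j j

/-- Kraus representation predicate. -/
def HasKraus {n' : Type*} [Fintype n']
    (Θ : Matrix n n ℂ →ₗ[ℂ] Matrix n' n' ℂ) : Prop :=
  ∃ (N : ℕ) (K : Fin N → Matrix n' n ℂ),
    (∀ X, Θ X = ∑ r, K r * X * (K r)ᴴ) ∧ (∑ r, (K r)ᴴ * K r = 1)

lemma sum_mulVec' {ι : Type*} (s : Finset ι) (A : ι → Matrix n n ℂ) (v : n → ℂ) :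
    (∑ r ∈ s, A r) *ᵥ v = ∑ r ∈ s, A r *ᵥ v := by
  funext i
  simp only [Matrix.mulVec, dotProduct, Matrix.sum_apply, Finset.sum_apply, Finset.sum_mul]
  rw [Finset.sum_comm]

lemma dotProduct_sum' {ι : Type*} (s : Finset ι) (u : n → ℂ) (w : ι → n → ℂ) :
    u ⬝ᵥ (∑ r ∈ s, w r) = ∑ r ∈ s, u ⬝ᵥ w r := by
  simp only [dotProduct, Finset.sum_apply, Finset.mul_sum]
  rw [Finset.sum_comm]

lemma good_sum_conj {n' : Type*} [Fintype n'] {N : ℕ} (K : Fin N → Matrix n' n ℂ)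
    (hK : ∑ r, (K r)ᴴ * K r = 1) {C : Matrix n' n' ℂ} (hC : good C) :
    good (∑ r, (K r)ᴴ * C * K r) := by
  have hsum : ∀ x : n → ℂ, ∑ r, nsq (K r *ᵥ x) = nsq x := by
    intro x
    have h1 : ∀ r : Fin N, nsq (K r *ᵥ x) = (star x ⬝ᵥ (((K r)ᴴ * K r) *ᵥ x)).re :=
      fun r => nsq_mulVec _ x
    simp only [h1]
    rw [← Complex.re_sum, ← dotProduct_sum', ← sum_mulVec', hK, Matrix.one_mulVec,
      ← nsq_eq_re_dot]
  intro v
  set w : n → ℂ := (∑ r, (K r)ᴴ * C * K r) *ᵥ v with hw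
  have key : nsq w ≤ Real.sqrt (nsq w) * Real.sqrt (nsq v) := by
    have h1 : nsq w = (star w ⬝ᵥ ((∑ r, (K r)ᴴ * C * K r) *ᵥ v)).re := by
      rw [nsq_eq_re_dot, hw]
    have h2 : star w ⬝ᵥ ((∑ r, (K r)ᴴ * C * K r) *ᵥ v)
        = ∑ r, star (K r *ᵥ w) ⬝ᵥ (C *ᵥ (K r *ᵥ v)) := by
      rw [sum_mulVec', dotProduct_sum']
      refine Finset.sum_congr rfl fun r _ => ?_
      rw [← Matrix.mulVec_mulVec, ← Matrix.mulVec_mulVec, dot_cT]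
    calc nsq w = ∑ r, (star (K r *ᵥ w) ⬝ᵥ (C *ᵥ (K r *ᵥ v))).re := by
          rw [h1, h2, Complex.re_sum]
      _ ≤ ∑ r, Real.sqrt (nsq (K r *ᵥ w)) * Real.sqrt (nsq (C *ᵥ (K r *ᵥ v))) :=
          Finset.sum_le_sum fun r _ => re_star_dot_le _ _
      _ ≤ ∑ r, Real.sqrt (nsq (K r *ᵥ w)) * Real.sqrt (nsq (K r *ᵥ v)) :=
          Finset.sum_le_sum fun r _ => mul_le_mul_of_nonneg_left
            (Real.sqrt_le_sqrt (hC _)) (Real.sqrt_nonneg _)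
      _ ≤ Real.sqrt (∑ r, nsq (K r *ᵥ w)) * Real.sqrt (∑ r, nsq (K r *ᵥ v)) :=
          Real.sum_sqrt_mul_sqrt_le _ (fun r => nsq_nonneg _) (fun r => nsq_nonneg _)
      _ = Real.sqrt (nsq w) * Real.sqrt (nsq v) := by rw [hsum w, hsum v]
  rcases eq_or_lt_of_le (Real.sqrt_nonneg (nsq w)) with ha | ha
  · have h0 : nsq w = 0 := by
      rw [← Real.sq_sqrt (nsq_nonneg w), ← ha]
      norm_num
    rw [h0]
    exact nsq_nonneg v
  · have hab : Real.sqrt (nsq w) ≤ Real.sqrt (nsq v) := by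
      have h3 : Real.sqrt (nsq w) * Real.sqrt (nsq w) ≤ Real.sqrt (nsq w) * Real.sqrt (nsq v) := by
        calc Real.sqrt (nsq w) * Real.sqrt (nsq w) = nsq w := Real.mul_self_sqrt (nsq_nonneg w)
          _ ≤ _ := key
      exact le_of_mul_le_mul_left h3 ha
    calc nsq w = Real.sqrt (nsq w) * Real.sqrt (nsq w) := (Real.mul_self_sqrt (nsq_nonneg w)).symm
      _ ≤ Real.sqrt (nsq v) * Real.sqrt (nsq v) := by nlinarith [Real.sqrt_nonneg (nsq w)]
      _ = nsq v := Real.mul_self_sqrt (nsq_nonneg v)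

lemma hasKraus_traceNorm_le {n' : Type*} [Fintype n'] [DecidableEq n']
    {Θ : Matrix n n ℂ →ₗ[ℂ] Matrix n' n' ℂ} (hΘ : HasKraus Θ) (X : Matrix n n ℂ) :
    traceNorm (Θ X) ≤ traceNorm X := by
  obtain ⟨N, K, hrep, hsum1⟩ := hΘ
  obtain ⟨C, hC, hCe⟩ := (traceNorm_spec (Θ X)).2.1
  rw [← hCe]
  have hD := good_sum_conj K hsum1 hC
  have htr : (Cᴴ * Θ X).trace = ((∑ r, (K r)ᴴ * C * K r)ᴴ * X).trace := by
    rw [hrep, Matrix.mul_sum, Matrix.trace_sum, Matrix.conjTranspose_sum, Matrix.sum_mul,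
      Matrix.trace_sum]
    refine Finset.sum_congr rfl fun r _ => ?_
    have hct : ((K r)ᴴ * C * K r)ᴴ = (K r)ᴴ * Cᴴ * K r := by
      rw [Matrix.conjTranspose_mul, Matrix.conjTranspose_mul,
        Matrix.conjTranspose_conjTranspose, ← Matrix.mul_assoc]
    rw [hct]
    calc (Cᴴ * (K r * X * (K r)ᴴ)).trace
        = ((Cᴴ * (K r * X)) * (K r)ᴴ).trace := by simp only [Matrix.mul_assoc]
      _ = ((K r)ᴴ * (Cᴴ * (K r * X))).trace := Matrix.trace_mul_comm _ _
      _ = ((K r)ᴴ * Cᴴ * K r * X).trace := by simp only [Matrix.mul_assoc]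
  rw [htr]
  exact (traceNorm_spec X).2.2 _ hD

end TNC

section Glue

variable {A A' : Type*} [Fintype A] [DecidableEq A] [Fintype A'] [DecidableEq A']

lemma lext_apply {B : Type*} [Fintype B] (Φ : Matrix A A ℂ →ₗ[ℂ] Matrix A' A' ℂ)
    (M : Matrix (A × B) (A × B) ℂ) (p q : A' × B) :
    lext Φ M p q = Φ (of fun i j => M (i, p.2) (j, q.2)) p.1 q.1 := rfl

lemma trace_stdBasisMatrix (i j : A) :
    (Matrix.single i j (1:ℂ)).trace = if i = j then 1 else 0 := by
  rw [Matrix.trace]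
  simp only [Matrix.diag, Matrix.single, Matrix.of_apply]
  by_cases h : i = j
  · subst h
    simp
  · rw [if_neg h]
    refine Finset.sum_eq_zero fun a _ => ?_
    by_cases h1 : i = a <;> by_cases h2 : j = a <;> simp_all

lemma isCPTP_hasKraus (Φ : Matrix A A ℂ →ₗ[ℂ] Matrix A' A' ℂ) (h : IsCPTP Φ) :
    HasKraus Φ := by
  classical
  set k := Fintype.card A with hk
  set e : A ≃ Fin k := Fintype.equivFin A with he
  set v : A × Fin k → ℂ := fun p => if e p.1 = p.2 then 1 else 0 with hv
  set Ω : Matrix (A × Fin k) (A × Fin k) ℂ := of (fun p q => v p * star (v q)) with hΩ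
  have hΩpsd : Ω.PosSemidef := by
    rw [Matrix.posSemidef_iff_dotProduct_mulVec]
    constructor
    · ext p q
      simp only [hΩ, Matrix.conjTranspose_apply, Matrix.of_apply, star_mul', star_star]
      ring
    · intro x
      have hmul : Ω *ᵥ x = fun p => v p * (star v ⬝ᵥ x) := by
        funext p
        simp only [hΩ, Matrix.mulVec, dotProduct, Matrix.of_apply, Pi.star_apply,
          Finset.mul_sum]
        exact Finset.sum_congr rfl fun q _ => by ring
      rw [hmul]
      have h3 : star x ⬝ᵥ (fun p => v p * (star v ⬝ᵥ x))
          = (∑ p, star (x p) * v p) * (star v ⬝ᵥ x) := by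
        simp only [dotProduct, Pi.star_apply, Finset.sum_mul, mul_assoc]
      have h4 : ∑ p, star (x p) * v p = star (star v ⬝ᵥ x) := by
        simp only [dotProduct, star_sum, Pi.star_apply, star_mul', star_star]
        exact Finset.sum_congr rfl fun p _ => by ring
      rw [h3, h4]
      exact star_mul_self_nonneg _
  set P := lext (B := Fin k) Φ Ω with hPdef
  have hPpsd : P.PosSemidef := h.1 k Ω hΩpsd
  have hPentry : ∀ (o o' : A') (i j : A),
      P (o, e i) (o', e j) = Φ (Matrix.single i j 1) o o' := by
    intro o o' i j
    have harg : (of fun i' j' => Ω (i', e i) (j', e j)) = Matrix.single i j (1:ℂ) := by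
      ext i' j'
      simp only [hΩ, Matrix.of_apply, hv, Matrix.single]
      by_cases h1 : e i' = e i <;> by_cases h2 : e j' = e j
      · have h1' : i = i' := (e.injective h1).symm
        have h2' : j = j' := (e.injective h2).symm
        simp [h1, h2, h1', h2']
      · have h2' : ¬ (j = j') := fun hc => h2 (by rw [hc])
        simp [h1, h2, h2']
      · have h1' : ¬ (i = i') := fun hc => h1 (by rw [hc])
        simp [h1, h2, h1']
      · have h1' : ¬ (i = i') := fun hc => h1 (by rw [hc])
        simp [h1, h2, h1']
    calc P (o, e i) (o', e j) = Φ (of fun i' j' => Ω (i', e i) (j', e j)) o o' := rfl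
      _ = _ := by rw [harg]
  have hBB : ∀ p q, P p q = ∑ r : A' × Fin k, star (hPpsd.sqrt r p) * hPpsd.sqrt r q := by
    intro p q
    have hps : P = hPpsd.sqrtᴴ * hPpsd.sqrt := by
      rw [hPpsd.posSemidef_sqrt.1, hPpsd.sqrt_mul_self]
    conv_lhs => rw [hps]
    simp [Matrix.mul_apply, Matrix.conjTranspose_apply]
  set K0 : (A' × Fin k) → Matrix A' A ℂ :=
    fun r => of fun o i => star (hPpsd.sqrt r (o, e i)) with hK0
  have swap3 : ∀ (f : A → A → (A' × Fin k) → ℂ),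
      ∑ r, ∑ j, ∑ i, f i j r = ∑ i, ∑ j, ∑ r, f i j r := by
    intro f
    calc ∑ r, ∑ j, ∑ i, f i j r
        = ∑ j, ∑ r, ∑ i, f i j r := Finset.sum_comm
      _ = ∑ j, ∑ i, ∑ r, f i j r := Finset.sum_congr rfl fun j _ => Finset.sum_comm
      _ = ∑ i, ∑ j, ∑ r, f i j r := Finset.sum_comm
  have hrep0 : ∀ X, Φ X = ∑ r : A' × Fin k, K0 r * X * (K0 r)ᴴ := by
    intro X
    have hstd : ∀ (i j : A), Matrix.single i j (X i j)
        = X i j • Matrix.single i j (1:ℂ) := by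
      intro i j
      rw [Matrix.smul_single, smul_eq_mul, mul_one]
    have hX : Φ X = ∑ i : A, ∑ j : A, X i j • Φ (Matrix.single i j 1) := by
      conv_lhs => rw [Matrix.matrix_eq_sum_single X]
      rw [map_sum]
      refine Finset.sum_congr rfl fun i _ => ?_
      rw [map_sum]
      refine Finset.sum_congr rfl fun j _ => ?_
      rw [hstd, _root_.map_smul]
    ext o o'
    rw [hX]
    have hlhs : (∑ i : A, ∑ j : A, X i j • Φ (Matrix.single i j 1)) o o'
        = ∑ i : A, ∑ j : A, ∑ r : A' × Fin k,
            X i j * (star (hPpsd.sqrt r (o, e i)) * hPpsd.sqrt r (o', e j)) := by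
      simp only [Matrix.sum_apply, Matrix.smul_apply, smul_eq_mul]
      refine Finset.sum_congr rfl fun i _ => Finset.sum_congr rfl fun j _ => ?_
      rw [← hPentry, hBB, Finset.mul_sum]
    rw [hlhs]
    have hrhs : (∑ r : A' × Fin k, K0 r * X * (K0 r)ᴴ) o o'
        = ∑ r : A' × Fin k, ∑ j : A, ∑ i : A,
            star (hPpsd.sqrt r (o, e i)) * X i j * hPpsd.sqrt r (o', e j) := by
      simp only [Matrix.sum_apply, Matrix.mul_apply, Matrix.conjTranspose_apply, hK0,
        Matrix.of_apply, star_star, Finset.sum_mul]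
    rw [hrhs, swap3]
    refine Finset.sum_congr rfl fun i _ => Finset.sum_congr rfl fun j _ =>
      Finset.sum_congr rfl fun r _ => by ring
  have hsum0 : ∑ r : A' × Fin k, (K0 r)ᴴ * K0 r = 1 := by
    ext i j
    have hlhs : (∑ r : A' × Fin k, (K0 r)ᴴ * K0 r) i j
        = ∑ o : A', star (P (o, e i) (o, e j)) := by
      simp only [Matrix.sum_apply, Matrix.mul_apply, Matrix.conjTranspose_apply, hK0,
        Matrix.of_apply, star_star]
      rw [Finset.sum_comm]
      refine Finset.sum_congr rfl fun o _ => ?_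
      rw [hBB, star_sum]
      refine Finset.sum_congr rfl fun r _ => ?_
      rw [star_mul', star_star]
    rw [hlhs]
    have hP2 : ∀ o : A', P (o, e i) (o, e j) = Φ (Matrix.single i j 1) o o :=
      fun o => hPentry o o i j
    simp only [hP2]
    rw [← star_sum]
    have htr : ∑ o : A', Φ (Matrix.single i j 1) o o
        = (Φ (Matrix.single i j 1)).trace := by
      rw [Matrix.trace]
      rfl
    rw [htr, h.2, trace_stdBasisMatrix]
    by_cases hij : i = j <;> simp [hij, Matrix.one_apply]
  set m := Fintype.card (A' × Fin k) with hm
  set σ : Fin m ≃ (A' × Fin k) := (Fintype.equivFin (A' × Fin k)).symm with hσ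
  refine ⟨m, fun r => K0 (σ r), fun X => ?_, ?_⟩
  · rw [hrep0 X, ← Equiv.sum_comp σ (fun p => K0 p * X * (K0 p)ᴴ)]
  · rw [← hsum0, ← Equiv.sum_comp σ (fun p => (K0 p)ᴴ * K0 p)]

end Glue

section Glue2

variable {A A' : Type*} [Fintype A] [DecidableEq A] [Fintype A'] [DecidableEq A']

lemma hasKraus_lext {B : Type*} [Fintype B] [DecidableEq B]
    {Θ : Matrix A A ℂ →ₗ[ℂ] Matrix A' A' ℂ} (hΘ : HasKraus Θ) :
    HasKraus (lext (B := B) Θ) := by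
  obtain ⟨N, K, hrep, hsum⟩ := hΘ
  set KC : Fin N → Matrix (A' × B) (A × B) ℂ :=
    fun r => of fun p q => K r p.1 q.1 * (if p.2 = q.2 then 1 else 0) with hKC
  have hKCM : ∀ (r : Fin N) (M : Matrix (A × B) (A × B) ℂ),
      KC r * M * (KC r)ᴴ
        = of (fun p q => (K r * (of fun i j => M (i, p.2) (j, q.2)) * (K r)ᴴ) p.1 q.1) := by
    intro r M
    ext p q
    obtain ⟨a, b⟩ := p
    obtain ⟨a', b'⟩ := q
    simp only [Matrix.mul_apply, Matrix.conjTranspose_apply, hKC, Matrix.of_apply,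
      Fintype.sum_prod_type, star_mul', apply_ite (star : ℂ → ℂ), star_one, star_zero, ite_mul, mul_ite,
      mul_one, mul_zero, zero_mul, one_mul, Finset.sum_ite_irrel, Finset.sum_ite_eq,
      Finset.sum_ite_eq', Finset.mem_univ, if_true, Finset.sum_mul, Finset.mul_sum]
  have hKCsum : ∑ r, (KC r)ᴴ * KC r = 1 := by
    ext p q
    have hstep : (∑ r, (KC r)ᴴ * KC r) p q
        = (∑ r, (K r)ᴴ * K r) p.1 q.1 * (if p.2 = q.2 then 1 else 0) := by
      obtain ⟨a, b⟩ := p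
      obtain ⟨a', b'⟩ := q
      simp only [Matrix.sum_apply, Matrix.mul_apply, Matrix.conjTranspose_apply, hKC,
        Matrix.of_apply, Fintype.sum_prod_type, star_mul', apply_ite (star : ℂ → ℂ), star_one, star_zero,
        ite_mul, mul_ite, mul_one, mul_zero, zero_mul, one_mul, Finset.sum_ite_irrel,
        Finset.sum_ite_eq, Finset.sum_ite_eq', Finset.mem_univ, if_true, Finset.sum_mul,
        Finset.mul_sum, Finset.sum_const_zero]
      by_cases hbb : b = b'
      · simp [hbb]
      · have hbb' : ¬ b' = b := fun hc => hbb hc.symm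
        simp [hbb, hbb']
    rw [hstep, hsum]
    obtain ⟨a, b⟩ := p
    obtain ⟨a', b'⟩ := q
    simp only [Matrix.one_apply, Prod.mk.injEq, ite_mul, one_mul, zero_mul, mul_ite,
      mul_one, mul_zero]
    by_cases h1 : a = a' <;> by_cases h2 : b = b' <;> simp [h1, h2]
  refine ⟨N, KC, fun M => ?_, hKCsum⟩
  ext p q
  rw [lext_apply, hrep]
  simp only [Matrix.sum_apply]
  refine Finset.sum_congr rfl fun r _ => ?_
  rw [hKCM r M]
  rfl

lemma lext_map_sub {B : Type*} [Fintype B] (Φ Ψ : Matrix A A ℂ →ₗ[ℂ] Matrix A' A' ℂ) :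
    lext (B := B) (Φ - Ψ) = lext (B := B) Φ - lext (B := B) Ψ := rfl

lemma lext_map_add {B : Type*} [Fintype B] (Φ Ψ : Matrix A A ℂ →ₗ[ℂ] Matrix A' A' ℂ) :
    lext (B := B) (Φ + Ψ) = lext (B := B) Φ + lext (B := B) Ψ := rfl

lemma rext_map_sub {B B' : Type*} [Fintype B] [Fintype B']
    (Φ Ψ : Matrix B B ℂ →ₗ[ℂ] Matrix B' B' ℂ) :
    rext (A := A) (Φ - Ψ) = rext (A := A) Φ - rext (A := A) Ψ := rfl

lemma lext_comp_apply {B X Y Z : Type*} [Fintype B] [Fintype X] [Fintype Y] [Fintype Z]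
    (Θ₂ : Matrix Y Y ℂ →ₗ[ℂ] Matrix Z Z ℂ) (Θ₁ : Matrix X X ℂ →ₗ[ℂ] Matrix Y Y ℂ)
    (M : Matrix (X × B) (X × B) ℂ) :
    lext (B := B) (Θ₂ ∘ₗ Θ₁) M = lext (B := B) Θ₂ (lext (B := B) Θ₁ M) := rfl

lemma lext_reindex {X X' C D : Type*} [Fintype X] [Fintype X'] [Fintype C] [Fintype D]
    (G : Matrix X X ℂ →ₗ[ℂ] Matrix X' X' ℂ) (e : C ≃ D) (M : Matrix (X × D) (X × D) ℂ) :
    lext (B := C) G (M.submatrix (Equiv.prodCongr (Equiv.refl X) e)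
        (Equiv.prodCongr (Equiv.refl X) e))
      = (lext (B := D) G M).submatrix (Equiv.prodCongr (Equiv.refl X') e)
          (Equiv.prodCongr (Equiv.refl X') e) := rfl

lemma lext_lext {X X' C : Type*} [Fintype X] [Fintype X'] [Fintype C] {k : ℕ}
    (G : Matrix X X ℂ →ₗ[ℂ] Matrix X' X' ℂ)
    (M : Matrix ((X × C) × Fin k) ((X × C) × Fin k) ℂ) :
    lext (B := C × Fin k) G (M.submatrix (Equiv.prodAssoc X C (Fin k)).symm
        (Equiv.prodAssoc X C (Fin k)).symm)
      = (lext (B := Fin k) (lext (B := C) G) M).submatrix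
          (Equiv.prodAssoc X' C (Fin k)).symm (Equiv.prodAssoc X' C (Fin k)).symm := rfl

/-- Regrouping equivalence for `rext` inside `lext`. -/
def swapE (X Y : Type*) (k : ℕ) : Y × (X × Fin k) ≃ (X × Y) × Fin k where
  toFun p := ((p.2.1, p.1), p.2.2)
  invFun q := (q.1.2, (q.1.1, q.2))
  left_inv _ := rfl
  right_inv _ := rfl

lemma lext_rext {X Y Y' : Type*} [Fintype X] [Fintype Y] [Fintype Y'] {k : ℕ}
    (G : Matrix Y Y ℂ →ₗ[ℂ] Matrix Y' Y' ℂ)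
    (M : Matrix ((X × Y) × Fin k) ((X × Y) × Fin k) ℂ) :
    lext (B := X × Fin k) G (M.submatrix (swapE X Y k) (swapE X Y k))
      = (lext (B := Fin k) (rext (A := X) G) M).submatrix (swapE X Y' k) (swapE X Y' k) := rfl

lemma diamondNorm_nonneg (Φ : Matrix A A ℂ →ₗ[ℂ] Matrix A' A' ℂ) :
    0 ≤ diamondNorm Φ := by
  refine Real.sSup_nonneg ?_
  rintro r ⟨k, X, hX, rfl⟩
  exact traceNorm_nonneg _

lemma diamond_bdd (E E' : Matrix A A ℂ →ₗ[ℂ] Matrix A' A' ℂ)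
    (hE : IsCPTP E) (hE' : IsCPTP E') :
    BddAbove {r | ∃ (k : ℕ) (X : Matrix (A × Fin k) (A × Fin k) ℂ),
      traceNorm X = 1 ∧ r = traceNorm (lext (B := Fin k) (E - E') X)} := by
  refine ⟨2, ?_⟩
  rintro r ⟨k, X, hX, rfl⟩
  have hsub : lext (B := Fin k) (E - E') X
      = lext (B := Fin k) E X - lext (B := Fin k) E' X := rfl
  rw [hsub]
  have h1 : traceNorm (lext (B := Fin k) E X) ≤ 1 := by
    rw [← hX]
    exact hasKraus_traceNorm_le (hasKraus_lext (isCPTP_hasKraus E hE)) X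
  have h2 : traceNorm (lext (B := Fin k) E' X) ≤ 1 := by
    rw [← hX]
    exact hasKraus_traceNorm_le (hasKraus_lext (isCPTP_hasKraus E' hE')) X
  have h3 := traceNorm_sub_le (lext (B := Fin k) E X) (lext (B := Fin k) E' X)
  linarith

lemma lext_le_diamond {C : Type*} [Fintype C] [DecidableEq C]
    (G : Matrix A A ℂ →ₗ[ℂ] Matrix A' A' ℂ)
    (hbdd : BddAbove {r | ∃ (k : ℕ) (X : Matrix (A × Fin k) (A × Fin k) ℂ),
      traceNorm X = 1 ∧ r = traceNorm (lext (B := Fin k) G X)})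
    (M : Matrix (A × C) (A × C) ℂ) (hM : traceNorm M = 1) :
    traceNorm (lext (B := C) G M) ≤ diamondNorm G := by
  classical
  set m := Fintype.card C with hm
  set σ : C ≃ Fin m := Fintype.equivFin C with hσ
  set M' : Matrix (A × Fin m) (A × Fin m) ℂ :=
    M.submatrix (Equiv.prodCongr (Equiv.refl A) σ.symm)
      (Equiv.prodCongr (Equiv.refl A) σ.symm) with hM'
  have hMM : M'.submatrix (Equiv.prodCongr (Equiv.refl A) σ)
      (Equiv.prodCongr (Equiv.refl A) σ) = M := by
    rw [hM', Matrix.submatrix_submatrix]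
    have hid : (⇑(Equiv.prodCongr (Equiv.refl A) σ.symm) ∘ ⇑(Equiv.prodCongr (Equiv.refl A) σ))
        = id := by
      funext p
      obtain ⟨a, c⟩ := p
      simp
    rw [hid, Matrix.submatrix_id_id]
  have hre := lext_reindex G σ M'
  rw [hMM] at hre
  rw [hre, traceNorm_submatrix]
  have hM'1 : traceNorm M' = 1 := by
    rw [hM', traceNorm_submatrix]
    exact hM
  exact le_csSup hbdd ⟨m, M', hM'1, rfl⟩

lemma tensor_decomp {B B' : Type*} [Fintype B] [Fintype B']
    (E E' : Matrix A A ℂ →ₗ[ℂ] Matrix A' A' ℂ)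
    (F F' : Matrix B B ℂ →ₗ[ℂ] Matrix B' B' ℂ) :
    tensorMap E F - tensorMap E' F'
      = (rext F).comp (lext (B := B) (E - E'))
        + (rext (A := A') (F - F')).comp (lext (B := B) E') := by
  rw [lext_map_sub, rext_map_sub, LinearMap.comp_sub, LinearMap.sub_comp]
  show tensorMap E F - tensorMap E' F'
      = ((rext F).comp (lext E) - (rext F).comp (lext E'))
        + ((rext F).comp (lext E') - (rext F').comp (lext E'))
  rw [tensorMap, tensorMap]
  abel

end Glue2

/-- Subadditivity of the diamond norm for differences of tensor products of channels. -/
theorem diamondNorm_tensor_sub_le {A A' B B' : Type*}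
    [Fintype A] [DecidableEq A] [Fintype A'] [DecidableEq A']
    [Fintype B] [DecidableEq B] [Fintype B'] [DecidableEq B']
    (E E' : Matrix A A ℂ →ₗ[ℂ] Matrix A' A' ℂ)
    (F F' : Matrix B B ℂ →ₗ[ℂ] Matrix B' B' ℂ)
    (hE : IsCPTP E) (hE' : IsCPTP E') (hF : IsCPTP F) (hF' : IsCPTP F') :
    diamondNorm (tensorMap E F - tensorMap E' F') ≤
      diamondNorm (E - E') + diamondNorm (F - F') := by
  classical
  refine Real.sSup_le ?_ (add_nonneg (diamondNorm_nonneg _) (diamondNorm_nonneg _))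
  rintro r ⟨k, X, hX1, rfl⟩
  have hdec : lext (B := Fin k) (tensorMap E F - tensorMap E' F') X
      = lext (B := Fin k) ((rext F).comp (lext (B := B) (E - E'))) X
        + lext (B := Fin k) ((rext (A := A') (F - F')).comp (lext (B := B) E')) X := by
    rw [tensor_decomp E E' F F']
    rfl
  rw [hdec]
  refine (traceNorm_triangle _ _).trans (add_le_add ?_ ?_)
  · -- first term, bounded by the diamond norm of E - E'
    rw [lext_comp_apply]
    set Y₁ := lext (B := Fin k) (lext (B := B) (E - E')) X with hY₁
    have hkF : HasKraus (lext (B := A' × Fin k) F) := hasKraus_lext (isCPTP_hasKraus F hF)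
    have step1 : traceNorm (lext (B := Fin k) (rext (A := A') F) Y₁) ≤ traceNorm Y₁ := by
      have e3 := lext_rext (X := A') (Y := B) (Y' := B') (k := k) F Y₁
      calc traceNorm (lext (B := Fin k) (rext (A := A') F) Y₁)
          = traceNorm ((lext (B := Fin k) (rext (A := A') F) Y₁).submatrix
              (swapE A' B' k) (swapE A' B' k)) := (traceNorm_submatrix _ _).symm
        _ = traceNorm (lext (B := A' × Fin k) F
              (Y₁.submatrix (swapE A' B k) (swapE A' B k))) := by rw [e3]
        _ ≤ traceNorm (Y₁.submatrix (swapE A' B k) (swapE A' B k)) :=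
            hasKraus_traceNorm_le hkF _
        _ = traceNorm Y₁ := traceNorm_submatrix _ _
    refine step1.trans ?_
    have e2 := lext_lext (X := A) (X' := A') (C := B) (k := k) (E - E') X
    have hY1eq : traceNorm Y₁ = traceNorm (lext (B := B × Fin k) (E - E')
        (X.submatrix (Equiv.prodAssoc A B (Fin k)).symm
          (Equiv.prodAssoc A B (Fin k)).symm)) := by
      rw [e2, hY₁, traceNorm_submatrix]
    rw [hY1eq]
    refine lext_le_diamond (E - E') (diamond_bdd E E' hE hE') _ ?_
    rw [traceNorm_submatrix]
    exact hX1
  · -- second term, bounded by the diamond norm of F - F'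
    rw [lext_comp_apply]
    set Y₂ := lext (B := Fin k) (lext (B := B) E') X with hY₂
    have ht1 : traceNorm Y₂ ≤ 1 := by
      have e2 := lext_lext (X := A) (X' := A') (C := B) (k := k) E' X
      have heq : traceNorm Y₂ = traceNorm (lext (B := B × Fin k) E'
          (X.submatrix (Equiv.prodAssoc A B (Fin k)).symm
            (Equiv.prodAssoc A B (Fin k)).symm)) := by
        rw [e2, hY₂, traceNorm_submatrix]
      rw [heq]
      calc traceNorm (lext (B := B × Fin k) E'
            (X.submatrix (Equiv.prodAssoc A B (Fin k)).symm
              (Equiv.prodAssoc A B (Fin k)).symm))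
          ≤ traceNorm (X.submatrix (Equiv.prodAssoc A B (Fin k)).symm
              (Equiv.prodAssoc A B (Fin k)).symm) :=
            hasKraus_traceNorm_le (hasKraus_lext (isCPTP_hasKraus E' hE')) _
        _ = 1 := by rw [traceNorm_submatrix]; exact hX1
    set Z := Y₂.submatrix (swapE A' B k) (swapE A' B k) with hZ
    have hZt : traceNorm Z = traceNorm Y₂ := traceNorm_submatrix _ _
    have hterm2 : traceNorm (lext (B := Fin k) (rext (A := A') (F - F')) Y₂)
        = traceNorm (lext (B := A' × Fin k) (F - F') Z) := by
      have e3 := lext_rext (X := A') (Y := B) (Y' := B') (k := k) (F - F') Y₂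
      rw [hZ, e3, traceNorm_submatrix]
    rw [hterm2]
    rcases eq_or_lt_of_le (traceNorm_nonneg Z) with h0 | h0
    · have hZ0 : Z = 0 := traceNorm_eq_zero h0.symm
      rw [hZ0, map_zero, traceNorm_zero]
      exact diamondNorm_nonneg _
    · set t := traceNorm Z with htdef
      set Z₀ : Matrix (B × (A' × Fin k)) (B × (A' × Fin k)) ℂ := ((t⁻¹ : ℝ) : ℂ) • Z with hZ₀
      have hZ₀t : traceNorm Z₀ = 1 := by
        rw [hZ₀, traceNorm_smul _ (inv_nonneg.2 h0.le), ← htdef, inv_mul_cancel₀ h0.ne']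
      have hZrec : Z = ((t : ℝ) : ℂ) • Z₀ := by
        rw [hZ₀, smul_smul, ← Complex.ofReal_mul, mul_inv_cancel₀ h0.ne']
        simp
      rw [hZrec, _root_.map_smul, traceNorm_smul _ h0.le]
      have hle : traceNorm (lext (B := A' × Fin k) (F - F') Z₀) ≤ diamondNorm (F - F') :=
        lext_le_diamond (F - F') (diamond_bdd F F' hF hF') Z₀ hZ₀t
      calc t * traceNorm (lext (B := A' × Fin k) (F - F') Z₀)
          ≤ 1 * diamondNorm (F - F') := by
            refine mul_le_mul ?_ hle (traceNorm_nonneg _) zero_le_one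
            exact (htdef.trans hZt).le.trans ht1
        _ = _ := one_mul _


end QIT

end
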